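/- arXiv:2601.03039 — 2 statements merged into one kernel-verified Lean document; each statement's English description precedes it below -/
import Mathlib

section
/- If p is analytic on the open unit disk with p(0)=1 and Re(p(z))>0 for all z in the disk, then for every positive integer n the n-th Taylor coefficient p_n of p at 0 satisfies |p_n| ≤ 2. -/
open Complex Metric MeasureTheory

private lemma intExpAux (m : ℤ) :
    (∫ θ in (0:ℝ)..(2*Real.pi), Complex.exp (m * θ * Complex.I))
      = if m = 0 then (2*Real.pi : ℂ) else 0 := by
  rcases eq_or_ne m 0 with h | h
  · simp [h]
  · have h2 : (m : ℂ) * Complex.I ≠ 0 := by simp [Complex.ext_iff, h]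
    have hθ : ∀ θ : ℝ, (m : ℂ) * θ * Complex.I = ((m : ℂ) * Complex.I) * θ := by
      intro θ; ring
    simp_rw [hθ]
    rw [integral_exp_mul_complex h2, if_neg h]
    have : (m : ℂ) * Complex.I * (2 * Real.pi : ℝ) = m * (2 * Real.pi * Complex.I) := by
      push_cast; ring
    rw [this, Complex.exp_int_mul_two_pi_mul_I]
    simp

private lemma keyHasSum (p : ℂ → ℂ) (c : ℕ → ℂ)
    (hp : ∀ z ∈ ball (0 : ℂ) 1, HasSum (fun n : ℕ => c n * z ^ n) (p z))
    (r : ℝ) (hr0 : 0 < r) (hr1 : r < 1)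
    (hsum : Summable fun k => ‖c k‖ * r ^ k) (m : ℤ) :
    HasSum (fun k : ℕ => if (k : ℤ) + m = 0 then (2*Real.pi : ℂ) * (c k * (r:ℂ) ^ k) else 0)
      (∫ θ in Set.Ioc (0:ℝ) (2*Real.pi),
        Complex.exp (m * θ * Complex.I) * p ((r:ℂ) * Complex.exp (θ * Complex.I))) := by
  have hz : ∀ θ : ℝ, (r:ℂ) * Complex.exp (θ * Complex.I) ∈ ball (0:ℂ) 1 := by
    intro θ
    simp [Complex.norm_exp, abs_of_pos hr0, hr1]
  set F : ℕ → ℝ → ℂ := fun k θ =>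
    Complex.exp (m * θ * Complex.I) * (c k * ((r:ℂ) * Complex.exp (θ * Complex.I)) ^ k) with hF
  have hFcont : ∀ k, Continuous (F k) := by
    intro k; fun_prop
  have hFnorm : ∀ k θ, ‖F k θ‖ = ‖c k‖ * r ^ k := by
    intro k θ
    simp [hF, Complex.norm_exp, abs_of_pos hr0, mul_pow, abs_pow]
  have hFint : ∀ k, Integrable (F k) (volume.restrict (Set.Ioc (0:ℝ) (2*Real.pi))) :=
    fun k => (hFcont k).integrableOn_Ioc
  have hInorm : ∀ k, (∫ θ in Set.Ioc (0:ℝ) (2*Real.pi), ‖F k θ‖)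
      = (2*Real.pi) * (‖c k‖ * r ^ k) := by
    intro k
    rw [setIntegral_congr_fun measurableSet_Ioc (fun θ _ => hFnorm k θ)]
    rw [setIntegral_const, smul_eq_mul, measureReal_def, Real.volume_Ioc]
    rw [ENNReal.toReal_ofReal (by nlinarith [Real.pi_pos])]
    ring
  have hsum' : Summable fun k => ∫ θ in Set.Ioc (0:ℝ) (2*Real.pi), ‖F k θ‖ := by
    simp_rw [hInorm]; exact hsum.mul_left _
  have H := hasSum_integral_of_summable_integral_norm hFint hsum'
  have h1 : ∀ k, (∫ θ in Set.Ioc (0:ℝ) (2*Real.pi), F k θ)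
      = if (k : ℤ) + m = 0 then (2*Real.pi : ℂ) * (c k * (r:ℂ) ^ k) else 0 := by
    intro k
    have e1 : ∀ θ : ℝ, F k θ =
        (c k * (r:ℂ) ^ k) * Complex.exp ((((k:ℤ) + m : ℤ) : ℂ) * θ * Complex.I) := by
      intro θ
      calc Complex.exp (m * θ * Complex.I) * (c k * ((r:ℂ) * Complex.exp (θ * Complex.I)) ^ k)
          = (c k * (r:ℂ) ^ k) * (Complex.exp ((k:ℕ) * (θ * Complex.I))
              * Complex.exp (m * θ * Complex.I)) := by
            rw [mul_pow, ← Complex.exp_nat_mul]; ring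
        _ = (c k * (r:ℂ) ^ k) * Complex.exp ((((k:ℤ) + m : ℤ) : ℂ) * θ * Complex.I) := by
            rw [← Complex.exp_add]; congr 1; push_cast; ring
    rw [setIntegral_congr_fun measurableSet_Ioc (fun θ _ => e1 θ)]
    rw [MeasureTheory.integral_const_mul]
    rw [← intervalIntegral.integral_of_le (by positivity), intExpAux]
    split_ifs <;> ring
  have h2 : (∫ θ in Set.Ioc (0:ℝ) (2*Real.pi), ∑' k, F k θ)
      = ∫ θ in Set.Ioc (0:ℝ) (2*Real.pi),
        Complex.exp (m * θ * Complex.I) * p ((r:ℂ) * Complex.exp (θ * Complex.I)) := by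
    refine setIntegral_congr_fun measurableSet_Ioc (fun θ _ => ?_)
    exact ((hp _ (hz θ)).mul_left (Complex.exp (m * θ * Complex.I))).tsum_eq
  rw [h2] at H
  simp only [h1] at H
  exact H

/-- Carathéodory coefficient bound: if `p` is analytic on the unit disk with
`p 0 = 1` and `Re (p z) > 0`, then every Taylor coefficient `c n` (`n ≥ 1`)
satisfies `|c n| ≤ 2`. -/
theorem caratheodory_coeff_bound (p : ℂ → ℂ) (c : ℕ → ℂ) (hc0 : c 0 = 1)
    (hp : ∀ z ∈ ball (0 : ℂ) 1, HasSum (fun n : ℕ => c n * z ^ n) (p z))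
    (hre : ∀ z ∈ ball (0 : ℂ) 1, 0 < (p z).re)
    (n : ℕ) (hn : 1 ≤ n) :
    ‖c n‖ ≤ 2 := by
  have pi_pos := Real.pi_pos
  have hmain : ∀ r : ℝ, r ∈ Set.Ioo (0:ℝ) 1 → ‖c n‖ * r ^ n ≤ 2 := by
    rintro r ⟨hr0, hr1⟩
    have hz : ∀ θ : ℝ, (r:ℂ) * Complex.exp (θ * Complex.I) ∈ ball (0:ℂ) 1 := by
      intro θ
      simp [Complex.norm_exp, abs_of_pos hr0, hr1]
    -- summability of |c k| r^k
    set r' : ℝ := (1 + r) / 2 with hr'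
    have hrr' : r < r' := by rw [hr']; linarith
    have hr'0 : 0 < r' := by rw [hr']; linarith
    have hr'1 : r' < 1 := by rw [hr']; linarith
    have hz' : ((r':ℝ):ℂ) ∈ ball (0:ℂ) 1 := by
      simp [abs_of_pos hr'0, hr'1]
    have hbdd : BddAbove (Set.range fun k => ‖c k * ((r':ℝ):ℂ) ^ k‖) :=
      Filter.Tendsto.bddAbove_range ((hp _ hz').summable.tendsto_atTop_zero.norm)
    obtain ⟨M, hM⟩ := hbdd
    have hMk : ∀ k, ‖c k‖ * r' ^ k ≤ M := by
      intro k
      have := hM ⟨k, rfl⟩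
      simpa [Complex.norm_real, abs_of_pos hr'0, mul_pow, abs_pow] using this
    have hsum : Summable fun k => ‖c k‖ * r ^ k := by
      have hgeo : Summable fun k : ℕ => M * (r / r') ^ k :=
        (summable_geometric_of_lt_one (by positivity) (by
          rw [div_lt_one hr'0]; exact hrr')).mul_left M
      refine Summable.of_nonneg_of_le (fun k => by positivity) (fun k => ?_) hgeo
      have hcancel : (r / r') ^ k * r' ^ k = r ^ k := by
        rw [div_pow, div_mul_cancel₀ _ (pow_ne_zero k (ne_of_gt hr'0))]
      have : ‖c k‖ * r ^ k = (‖c k‖ * r' ^ k) * (r / r') ^ k := by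
        rw [← hcancel]; ring
      rw [this]
      exact mul_le_mul_of_nonneg_right (hMk k) (by positivity)
    -- the three integrals
    have hJ := keyHasSum p c hp r hr0 hr1 hsum (-(n:ℤ))
    have hK := keyHasSum p c hp r hr0 hr1 hsum (n:ℤ)
    have h0 := keyHasSum p c hp r hr0 hr1 hsum 0
    push_cast at hJ hK h0
    -- J = 2π c_n r^n
    have hJval : (∫ θ in Set.Ioc (0:ℝ) (2*Real.pi),
        Complex.exp (-(n:ℤ) * θ * Complex.I) * p ((r:ℂ) * Complex.exp (θ * Complex.I)))
        = (2*Real.pi : ℂ) * (c n * (r:ℂ) ^ n) := by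
      refine hJ.unique ?_
      have : (fun k : ℕ => if (k : ℤ) + -(n:ℤ) = 0 then (2*Real.pi : ℂ) * (c k * (r:ℂ) ^ k) else 0)
          = fun k : ℕ => if k = n then (2*Real.pi : ℂ) * (c n * (r:ℂ) ^ n) else 0 := by
        funext k
        by_cases h : k = n
        · subst h; simp
        · rw [if_neg h, if_neg]
          omega
      rw [this]
      exact hasSum_ite_eq n _
    -- K = 0
    have hKval : (∫ θ in Set.Ioc (0:ℝ) (2*Real.pi),
        Complex.exp ((n:ℤ) * θ * Complex.I) * p ((r:ℂ) * Complex.exp (θ * Complex.I))) = 0 := by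
      refine hK.unique ?_
      have : (fun k : ℕ => if (k : ℤ) + (n:ℤ) = 0 then (2*Real.pi : ℂ) * (c k * (r:ℂ) ^ k) else 0)
          = fun _ : ℕ => (0:ℂ) := by
        funext k
        rw [if_neg]
        omega
      rw [this]
      exact hasSum_zero
    -- ∫ p = 2π
    have h0val : (∫ θ in Set.Ioc (0:ℝ) (2*Real.pi),
        p ((r:ℂ) * Complex.exp (θ * Complex.I))) = (2*Real.pi : ℂ) := by
      have h0' := h0
      simp only [Int.cast_zero, zero_mul, Complex.exp_zero, one_mul, add_zero,
        Int.natCast_eq_zero] at h0'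
      have : (fun k : ℕ => if k = 0 then (2*Real.pi : ℂ) * (c k * (r:ℂ) ^ k) else 0)
          = fun k : ℕ => if k = 0 then (2*Real.pi : ℂ) else 0 := by
        funext k
        by_cases h : k = 0
        · subst h; simp [hc0]
        · simp [h]
      rw [this] at h0'
      refine h0'.unique ?_
      simpa using hasSum_ite_eq 0 (2*Real.pi : ℂ)
    -- conjugate integral vanishes
    have hconj : (∫ θ in Set.Ioc (0:ℝ) (2*Real.pi),
        Complex.exp (-(n:ℤ) * θ * Complex.I)
          * (starRingEnd ℂ) (p ((r:ℂ) * Complex.exp (θ * Complex.I)))) = 0 := by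
      have e : ∀ θ : ℝ, Complex.exp (-(n:ℤ) * θ * Complex.I)
            * (starRingEnd ℂ) (p ((r:ℂ) * Complex.exp (θ * Complex.I)))
          = (starRingEnd ℂ) (Complex.exp ((n:ℤ) * θ * Complex.I)
            * p ((r:ℂ) * Complex.exp (θ * Complex.I))) := by
        intro θ
        rw [map_mul, ← Complex.exp_conj]
        congr 2
        simp [Complex.ext_iff]
      rw [setIntegral_congr_fun measurableSet_Ioc (fun θ _ => e θ)]
      rw [integral_conj, hKval, map_zero]
    -- continuity of the boundary function
    have hgcont : Continuous fun θ : ℝ => p ((r:ℂ) * Complex.exp (θ * Complex.I)) := by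
      have hc : Continuous fun θ : ℝ => ∑' k, c k * ((r:ℂ) * Complex.exp (θ * Complex.I)) ^ k := by
        refine continuous_tsum (fun k => by fun_prop) hsum (fun k θ => ?_)
        simp [Complex.norm_exp, abs_of_pos hr0, mul_pow, _root_.abs_pow]
      refine hc.congr fun θ => ((hp _ (hz θ)).tsum_eq)
    -- split: ∫ e^{-inθ}(p + conj p) = 2π c_n r^n
    have hsplit : (∫ θ in Set.Ioc (0:ℝ) (2*Real.pi),
        Complex.exp (-(n:ℤ) * θ * Complex.I)
          * (2 * ((p ((r:ℂ) * Complex.exp (θ * Complex.I))).re : ℂ)))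
        = (2*Real.pi : ℂ) * (c n * (r:ℂ) ^ n) := by
      have e : ∀ θ : ℝ, Complex.exp (-(n:ℤ) * θ * Complex.I)
            * (2 * ((p ((r:ℂ) * Complex.exp (θ * Complex.I))).re : ℂ))
          = Complex.exp (-(n:ℤ) * θ * Complex.I) * p ((r:ℂ) * Complex.exp (θ * Complex.I))
            + Complex.exp (-(n:ℤ) * θ * Complex.I)
              * (starRingEnd ℂ) (p ((r:ℂ) * Complex.exp (θ * Complex.I))) := by
        intro θ
        rw [← mul_add, Complex.add_conj]
        push_cast
        ring
      rw [setIntegral_congr_fun measurableSet_Ioc (fun θ _ => e θ)]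
      rw [integral_add]
      · rw [hJval, hconj, add_zero]
      · exact (((by fun_prop : Continuous fun θ : ℝ =>
            Complex.exp (-(n:ℤ) * θ * Complex.I))).mul hgcont).integrableOn_Ioc
      · exact (((by fun_prop : Continuous fun θ : ℝ =>
            Complex.exp (-(n:ℤ) * θ * Complex.I))).mul hgcont.star).integrableOn_Ioc
    -- norm bound
    have hIntP : IntegrableOn (fun θ : ℝ => p ((r:ℂ) * Complex.exp (θ * Complex.I)))
        (Set.Ioc (0:ℝ) (2*Real.pi)) := hgcont.integrableOn_Ioc
    have hnormbd : ‖(2*Real.pi : ℂ) * (c n * (r:ℂ) ^ n)‖ ≤ 2 * (2*Real.pi) := by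
      rw [← hsplit]
      calc ‖∫ θ in Set.Ioc (0:ℝ) (2*Real.pi),
            Complex.exp (-(n:ℤ) * θ * Complex.I)
              * (2 * ((p ((r:ℂ) * Complex.exp (θ * Complex.I))).re : ℂ))‖
          ≤ ∫ θ in Set.Ioc (0:ℝ) (2*Real.pi), ‖Complex.exp (-(n:ℤ) * θ * Complex.I)
              * (2 * ((p ((r:ℂ) * Complex.exp (θ * Complex.I))).re : ℂ))‖ :=
            norm_integral_le_integral_norm _
        _ = ∫ θ in Set.Ioc (0:ℝ) (2*Real.pi),
              2 * (p ((r:ℂ) * Complex.exp (θ * Complex.I))).re := by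
            refine setIntegral_congr_fun measurableSet_Ioc (fun θ _ => ?_)
            rw [norm_mul, Complex.norm_exp]
            have hpos := hre _ (hz θ)
            simp [Complex.norm_real, abs_of_pos hpos]
        _ = 2 * ((∫ θ in Set.Ioc (0:ℝ) (2*Real.pi),
              p ((r:ℂ) * Complex.exp (θ * Complex.I)))).re := by
            rw [MeasureTheory.integral_const_mul]
            congr 1
            have := Complex.reCLM.integral_comp_comm hIntP
            simpa using this
        _ = 2 * (2*Real.pi) := by rw [h0val]; norm_num
    have habs : ‖(2*Real.pi : ℂ) * (c n * (r:ℂ) ^ n)‖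
        = (2*Real.pi) * (‖c n‖ * r ^ n) := by
      rw [norm_mul, norm_mul, norm_mul, norm_pow]
      simp [Real.norm_eq_abs, abs_of_pos hr0, abs_of_pos pi_pos]
    rw [habs] at hnormbd
    have h2pi : (0:ℝ) < 2*Real.pi := by positivity
    nlinarith [hnormbd]
  -- take r → 1⁻
  have hne : (nhdsWithin (1:ℝ) (Set.Ioo 0 1)).NeBot := right_nhdsWithin_Ioo_neBot one_pos
  have htend : Filter.Tendsto (fun r : ℝ => ‖c n‖ * r ^ n)
      (nhdsWithin (1:ℝ) (Set.Ioo 0 1)) (nhds (‖c n‖)) := by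
    have hcont : Continuous fun r : ℝ => ‖c n‖ * r ^ n := by fun_prop
    have := hcont.tendsto 1
    simp only [one_pow, mul_one] at this
    exact this.mono_left nhdsWithin_le_nhds
  refine le_of_tendsto htend ?_
  filter_upwards [self_mem_nhdsWithin] with r hr using hmain r hr
end

section
/- Let k be a positive integer and let f(z) = z + Σ_{n≥1} a_{nk+1} z^{nk+1} be starlike on the unit disk. Then |a_{k+1}| ≤ 2/k and |a_{2k+1}| ≤ (k+2)/k². -/
open Complex Metric
open scoped ENNReal NNReal

namespace StarlikeAux

open FormalMultilinearSeries Finset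

lemma ball01 : Metric.eball (0:ℂ) 1 = ball (0:ℂ) 1 := by
  rw [show (1 : ℝ≥0∞) = ((1:ℝ≥0) : ℝ≥0∞) by simp, Metric.emetric_ball_nnreal]
  norm_num

/-- Pointwise sums on the unit ball give a power series on the unit ball. -/
lemma hasFPowerSeriesOnBall_of_hasSum {F : ℂ → ℂ} {a : ℕ → ℂ}
    (h : ∀ z ∈ ball (0:ℂ) 1, HasSum (fun m : ℕ => a m * z ^ m) (F z)) :
    HasFPowerSeriesOnBall F (ofScalars ℂ a) 0 1 := by
  refine ⟨?_, one_pos, ?_⟩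
  · refine ENNReal.le_of_forall_nnreal_lt fun r hr => ?_
    have hr1 : (r : ℝ) < 1 := by exact_mod_cast hr
    have hz : ((r : ℝ) : ℂ) ∈ ball (0:ℂ) 1 := by
      simp [Complex.norm_real, Real.norm_eq_abs, _root_.abs_of_nonneg r.coe_nonneg, hr1]
    have hs : Summable fun m : ℕ => ‖a m * ((r:ℝ):ℂ) ^ m‖ :=
      summable_norm_iff.mpr (h _ hz).summable
    apply le_radius_of_summable
    have : ∀ m : ℕ, ‖a m * ((r:ℝ):ℂ) ^ m‖ = ‖ofScalars ℂ a m‖ * (r:ℝ) ^ m := by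
      intro m
      rw [ofScalars_norm, norm_mul, norm_pow]
      simp [Complex.norm_real, Real.norm_eq_abs, _root_.abs_of_nonneg r.coe_nonneg]
    exact (summable_congr this).mp hs
  · intro y hy
    rw [ball01] at hy
    simp only [ofScalars_apply_eq, smul_eq_mul, zero_add]
    exact h y hy

end StarlikeAux

namespace StarlikeAux
open FormalMultilinearSeries Finset

lemma hasSum_congr' {f g : ℕ → ℂ} {a : ℂ} (h : ∀ n, f n = g n) (H : HasSum f a) :
    HasSum g a := by
  rwa [show g = f from funext fun n => (h n).symm]

/-- Extract pointwise sums from a power series on the unit ball. -/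
lemma hasSum_of_hasFPowerSeriesOnBall {F : ℂ → ℂ} {P : FormalMultilinearSeries ℂ ℂ ℂ}
    (h : HasFPowerSeriesOnBall F P 0 1) :
    ∀ z ∈ ball (0:ℂ) 1, HasSum (fun m : ℕ => P.coeff m * z ^ m) (F z) := by
  intro z hz
  rw [← ball01] at hz
  have := h.hasSum hz
  simp only [apply_eq_pow_smul_coeff, smul_eq_mul, zero_add] at this
  exact hasSum_congr' (fun n => by ring) this

/-- A function differentiable on the unit ball is there the sum of a power series. -/
lemma exists_hasSum_of_differentiableOn {g : ℂ → ℂ}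
    (hg : DifferentiableOn ℂ g (ball (0:ℂ) 1)) :
    ∃ q : ℕ → ℂ, ∀ z ∈ ball (0:ℂ) 1, HasSum (fun m : ℕ => q m * z ^ m) (g z) := by
  have hhalf : DifferentiableOn ℂ g (closedBall (0:ℂ) ((1/2 : ℝ≥0) : ℝ)) :=
    hg.mono (closedBall_subset_ball (by norm_num))
  have S0 : HasFPowerSeriesOnBall g (cauchyPowerSeries g 0 ((1/2:ℝ≥0):ℝ)) 0 (1/2 : ℝ≥0) :=
    hhalf.hasFPowerSeriesOnBall (by norm_num)
  set Q := cauchyPowerSeries g 0 ((1/2:ℝ≥0):ℝ) with hQdef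
  refine ⟨Q.coeff, fun z hz => ?_⟩
  have hz1 : ‖z‖ < 1 := by simpa [mem_ball, dist_zero_right] using hz
  have hmax : max ‖z‖ (1/2) < 1 := max_lt hz1 (by norm_num)
  obtain ⟨r, hr1, hr2⟩ := exists_between hmax
  have hr0 : (0:ℝ) < r :=
    lt_of_lt_of_le (by norm_num : (0:ℝ) < 1/2) ((le_max_right ‖z‖ (1/2)).trans hr1.le)
  set rn : ℝ≥0 := ⟨r, hr0.le⟩ with hrn
  have hrdiff : DifferentiableOn ℂ g (closedBall (0:ℂ) (rn:ℝ)) :=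
    hg.mono (closedBall_subset_ball hr2)
  have Sr : HasFPowerSeriesOnBall g (cauchyPowerSeries g 0 (rn:ℝ)) 0 rn :=
    hrdiff.hasFPowerSeriesOnBall (by exact_mod_cast hr0)
  have heq : cauchyPowerSeries g 0 (rn:ℝ) = Q :=
    Sr.hasFPowerSeriesAt.eq_formalMultilinearSeries S0.hasFPowerSeriesAt
  rw [heq] at Sr
  have hzr : z ∈ Metric.eball (0:ℂ) rn := by
    rw [Metric.emetric_ball_nnreal]
    simpa [mem_ball, dist_zero_right] using (lt_of_le_of_lt (le_max_left ‖z‖ (1/2)) hr1 : ‖z‖ < (rn:ℝ))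
  have := Sr.hasSum hzr
  simp only [apply_eq_pow_smul_coeff, smul_eq_mul, zero_add] at this
  exact hasSum_congr' (fun n => by ring) this

/-- Cauchy product of two power series on the unit ball. -/
lemma hasSum_mul {F G : ℂ → ℂ} {a b : ℕ → ℂ}
    (ha : ∀ z ∈ ball (0:ℂ) 1, HasSum (fun m : ℕ => a m * z ^ m) (F z))
    (hb : ∀ z ∈ ball (0:ℂ) 1, HasSum (fun m : ℕ => b m * z ^ m) (G z)) :
    ∀ z ∈ ball (0:ℂ) 1, HasSum
      (fun m : ℕ => (∑ kl ∈ antidiagonal m, a kl.1 * b kl.2) * z ^ m) (F z * G z) := by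
  intro z hz
  have Sa : Summable fun m : ℕ => ‖a m * z ^ m‖ := summable_norm_iff.mpr (ha z hz).summable
  have Sb : Summable fun m : ℕ => ‖b m * z ^ m‖ := summable_norm_iff.mpr (hb z hz).summable
  have key : ∀ m : ℕ, ∑ kl ∈ antidiagonal m, (a kl.1 * z ^ kl.1) * (b kl.2 * z ^ kl.2)
      = (∑ kl ∈ antidiagonal m, a kl.1 * b kl.2) * z ^ m := by
    intro m
    rw [Finset.sum_mul]
    refine Finset.sum_congr rfl fun kl hkl => ?_
    have h := Finset.HasAntidiagonal.mem_antidiagonal.mp hkl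
    rw [← h, pow_add]; ring
  have hsummable : Summable fun m : ℕ =>
      (∑ kl ∈ antidiagonal m, a kl.1 * b kl.2) * z ^ m := by
    have := summable_norm_sum_mul_antidiagonal_of_summable_norm Sa Sb
    have h2 := this.of_norm
    exact (summable_congr (fun m => key m)).mp h2
  have htsum := tsum_mul_tsum_eq_tsum_sum_antidiagonal_of_summable_norm Sa Sb
  rw [(ha z hz).tsum_eq, (hb z hz).tsum_eq] at htsum
  have : ∑' m : ℕ, (∑ kl ∈ antidiagonal m, a kl.1 * b kl.2) * z ^ m = F z * G z := by
    rw [htsum]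
    exact tsum_congr fun m => (key m).symm ▸ rfl
  exact this ▸ hsummable.hasSum
end StarlikeAux

namespace StarlikeAux
open FormalMultilinearSeries Finset

/-- Term-by-term derivative: `z ↦ z * f'(z)` has coefficients `m * c m`. -/
lemma hasSum_z_mul_deriv {f : ℂ → ℂ} {c : ℕ → ℂ}
    (hP : HasFPowerSeriesOnBall f (ofScalars ℂ c) 0 1) :
    ∀ z ∈ ball (0:ℂ) 1, HasSum (fun m : ℕ => (m : ℂ) * c m * z ^ m) (z * deriv f z) := by
  intro z hz
  have hz' : z ∈ Metric.eball (0:ℂ) 1 := by rwa [ball01]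
  have hD := hP.fderiv
  have hS := hD.hasSum hz'
  have hev := (ContinuousLinearMap.apply ℂ ℂ z).hasSum hS
  have hterm : ∀ n : ℕ, (ContinuousLinearMap.apply ℂ ℂ z) ((ofScalars ℂ c).derivSeries n fun _ => z)
      = ((n:ℂ) + 1) * c (n+1) * z ^ (n+1) := by
    intro n
    rw [ContinuousLinearMap.apply_apply, derivSeries_apply_diag, ofScalars_apply_eq]
    push_cast [nsmul_eq_mul, smul_eq_mul]
    ring
  have hval : (ContinuousLinearMap.apply ℂ ℂ z) (fderiv ℂ f (0 + z)) = z * deriv f z := by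
    rw [zero_add, ContinuousLinearMap.apply_apply]
    have h0 : (fderiv ℂ f z) z = (fderiv ℂ f z) (z • (1:ℂ)) := by simp
    rw [h0, (fderiv ℂ f z).map_smul, smul_eq_mul, fderiv_apply_one_eq_deriv]
  rw [hval] at hev
  have hev' : HasSum (fun n : ℕ => ((n+1:ℕ) : ℂ) * c (n+1) * z ^ (n+1)) (z * deriv f z) :=
    hasSum_congr' (fun n => by rw [hterm n]; push_cast; ring) hev
  have hev'' : HasSum (fun n : ℕ => (fun m : ℕ => (m:ℂ) * c m * z ^ m) (n+1))
      (z * deriv f z - ∑ i ∈ range 1, (fun m : ℕ => (m:ℂ) * c m * z ^ m) i) := by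
    simpa using hev'
  exact (hasSum_nat_add_iff' 1).mp hev''
end StarlikeAux

namespace StarlikeAux
open FormalMultilinearSeries Finset intervalIntegral

lemma integral_exp_int (μ : ℤ) :
    ∫ θ in (0:ℝ)..(2*Real.pi), Complex.exp ((μ:ℂ) * θ * I)
      = if μ = 0 then (2*Real.pi : ℂ) else 0 := by
  split_ifs with h
  · subst h
    simp only [Int.cast_zero, zero_mul]
    rw [intervalIntegral.integral_congr (g := fun _ => (1:ℂ)) (by
      intro θ _; simp)]
    simp [Real.pi_pos.le]
  · have hc : (μ:ℂ) * I ≠ 0 := by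
      exact mul_ne_zero (by exact_mod_cast h) I_ne_zero
    rw [intervalIntegral.integral_congr (g := fun θ : ℝ => Complex.exp (((μ:ℂ) * I) * θ)) (by
      intro θ _; ring_nf)]
    rw [integral_exp_mul_complex hc]
    have h1 : Complex.exp ((μ:ℂ) * I * ((2:ℂ) * (Real.pi:ℂ))) = 1 := by
      have := Complex.exp_int_mul_two_pi_mul_I μ
      convert this using 2
      push_cast; ring
    rw [show ((2*Real.pi : ℝ):ℂ) = (2:ℂ) * (Real.pi:ℂ) by push_cast; ring, h1]
    simp

lemma intervalIntegral_conj {F : ℝ → ℂ} {a b : ℝ} :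
    ∫ θ in a..b, (starRingEnd ℂ) (F θ) = (starRingEnd ℂ) (∫ θ in a..b, F θ) := by
  rw [intervalIntegral_eq_integral_uIoc, intervalIntegral_eq_integral_uIoc,
    integral_conj]
  split_ifs with h
  · simp
  · simp [Complex.real_smul]

lemma intervalIntegral_re {F : ℝ → ℂ} {a b : ℝ}
    (hF : IntervalIntegrable F MeasureTheory.volume a b) :
    ∫ θ in a..b, (F θ).re = (∫ θ in a..b, F θ).re := by
  simpa using Complex.reCLM.intervalIntegral_comp_comm hF

end StarlikeAux

namespace StarlikeAux
open FormalMultilinearSeries Finset MeasureTheory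

/-- Carathéodory-type coefficient bound for functions with nonnegative real part. -/
lemma caratheodory {g : ℂ → ℂ} {q : ℕ → ℂ}
    (hg : ∀ z ∈ ball (0:ℂ) 1, HasSum (fun m : ℕ => q m * z ^ m) (g z))
    (hgc : ContinuousOn g (ball (0:ℂ) 1))
    (hre : ∀ z ∈ ball (0:ℂ) 1, 0 ≤ (g z).re)
    {m : ℕ} (hm : 1 ≤ m) : ‖q m‖ ≤ 2 * (q 0).re := by
  have key : ∀ r : ℝ, 0 < r → r < 1 → ‖q m‖ * r ^ m ≤ 2 * (q 0).re := by
    intro r hr0 hr1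
    set w : ℝ → ℂ := fun θ => (r:ℂ) * Complex.exp (θ * I) with hw
    have habsw : ∀ θ : ℝ, ‖w θ‖ = r := by
      intro θ
      rw [hw]
      simp [norm_mul, Complex.norm_exp_ofReal_mul_I, Complex.norm_real, Real.norm_eq_abs, _root_.abs_of_nonneg hr0.le]
    have hw_mem : ∀ θ : ℝ, w θ ∈ ball (0:ℂ) 1 := by
      intro θ
      simp only [mem_ball, dist_zero_right, habsw θ]
      exact hr1
    have hw_cont : Continuous w :=
      continuous_const.mul (Complex.continuous_exp.comp
        (Complex.continuous_ofReal.mul continuous_const))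
    have hgw_cont : Continuous fun θ : ℝ => g (w θ) := hgc.comp_continuous hw_cont hw_mem
    -- summability of coefficients on the circle of radius r
    have P := hasFPowerSeriesOnBall_of_hasSum hg
    have hrad : ((r.toNNReal : ℝ≥0) : ℝ≥0∞) < (ofScalars ℂ q).radius := by
      refine lt_of_lt_of_le ?_ P.r_le
      rw [show (1:ℝ≥0∞) = ((1:ℝ≥0):ℝ≥0∞) by simp]
      exact_mod_cast (by simpa [Real.toNNReal_lt_one] using hr1 : r.toNNReal < 1)
    have hsum : Summable fun n : ℕ => ‖q n‖ * r ^ n := by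
      have h1 := (ofScalars ℂ q).summable_norm_mul_pow hrad
      have h2 : ∀ n : ℕ, ‖ofScalars ℂ q n‖ * ((r.toNNReal : ℝ)) ^ n = ‖q n‖ * r ^ n := by
        intro n
        rw [ofScalars_norm, Real.coe_toNNReal _ hr0.le]
      exact (summable_congr h2).mp h1
    -- term-by-term integration
    have main : ∀ l : ℤ, HasSum
        (fun n : ℕ => q n * (r:ℂ)^n * (if (n:ℤ) + l = 0 then ((2*Real.pi : ℝ):ℂ) else 0))
        (∫ θ in (0:ℝ)..(2*Real.pi), g (w θ) * Complex.exp ((l:ℂ) * θ * I)) := by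
      intro l
      have hΦc : ∀ n : ℕ, Continuous fun θ : ℝ => q n * (w θ)^n * Complex.exp ((l:ℂ)*θ*I) := by
        intro n
        exact ((continuous_const.mul (hw_cont.pow n)).mul
          (Complex.continuous_exp.comp ((continuous_const.mul Complex.continuous_ofReal).mul
            continuous_const)))
      set Φ : ℕ → C(ℝ, ℂ) := fun n => ⟨fun θ => q n * (w θ)^n * Complex.exp ((l:ℂ)*θ*I), hΦc n⟩
        with hΦ
      have habse : ∀ θ : ℝ, ‖Complex.exp ((l:ℂ)*θ*I)‖ = 1 := by
        intro θ
        rw [show (l:ℂ)*(θ:ℂ)*I = ((l*θ : ℝ):ℂ)*I by push_cast; ring]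
        exact Complex.norm_exp_ofReal_mul_I _
      have hnorm : ∀ (n : ℕ) (θ : ℝ), ‖Φ n θ‖ = ‖q n‖ * r ^ n := by
        intro n θ
        simp only [hΦ, ContinuousMap.coe_mk, norm_mul, norm_pow,
          habsw θ, habse θ, mul_one]
      have hΦsum : Summable fun n : ℕ =>
          ‖(Φ n).restrict (⟨Set.uIcc (0:ℝ) (2*Real.pi), isCompact_uIcc⟩ :
            TopologicalSpace.Compacts ℝ)‖ := by
        refine Summable.of_nonneg_of_le (fun n => norm_nonneg _) (fun n => ?_) hsum
        refine (ContinuousMap.norm_le _ (by positivity)).mpr ?_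
        rintro ⟨θ, hθ⟩
        simp only [ContinuousMap.restrict_apply]
        rw [hnorm n θ]
      have H := intervalIntegral.hasSum_intervalIntegral_of_summable_norm (a := 0) (b := 2*Real.pi) hΦsum
      have htsum : ∀ θ : ℝ, ∑' n : ℕ, Φ n θ = g (w θ) * Complex.exp ((l:ℂ)*θ*I) := by
        intro θ
        exact ((hg (w θ) (hw_mem θ)).mul_right _).tsum_eq
      rw [intervalIntegral.integral_congr (g := fun θ => g (w θ) * Complex.exp ((l:ℂ)*θ*I))
        (fun θ _ => htsum θ)] at H
      have hint : ∀ n : ℕ, (∫ θ in (0:ℝ)..(2*Real.pi), Φ n θ)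
          = q n * (r:ℂ)^n * (if (n:ℤ) + l = 0 then ((2*Real.pi : ℝ):ℂ) else 0) := by
        intro n
        have hptw : ∀ θ : ℝ, Φ n θ
            = q n * (r:ℂ)^n * Complex.exp (((((n:ℤ)+l : ℤ)):ℂ) * θ * I) := by
          intro θ
          simp only [hΦ, ContinuousMap.coe_mk, hw]
          have e1 : Complex.exp (((((n:ℤ)+l : ℤ)):ℂ) * θ * I)
              = Complex.exp ((n:ℂ)*((θ:ℂ)*I)) * Complex.exp ((l:ℂ)*(θ:ℂ)*I) := by
            rw [← Complex.exp_add]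
            congr 1
            push_cast
            ring
          rw [e1, Complex.exp_nat_mul, mul_pow]
          ring
        rw [intervalIntegral.integral_congr (fun θ _ => hptw θ),
          intervalIntegral.integral_const_mul, integral_exp_int]
        congr 1
        split_ifs <;> push_cast <;> ring
      exact hasSum_congr' hint H
    -- the three integral identities
    have hA := main (-(m:ℤ))
    have hB := main (m:ℤ)
    have hC := main 0
    have hAval : HasSum (fun n : ℕ => q n * (r:ℂ)^n *
        (if (n:ℤ) + (-(m:ℤ)) = 0 then ((2*Real.pi : ℝ):ℂ) else 0))
        (q m * (r:ℂ)^m * ((2*Real.pi : ℝ):ℂ)) := by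
      have := hasSum_ite_eq m (q m * (r:ℂ)^m * ((2*Real.pi : ℝ):ℂ))
      refine hasSum_congr' (fun n => ?_) this
      by_cases hn : n = m
      · subst hn; simp
      · have : ¬((n:ℤ) + (-(m:ℤ)) = 0) := by omega
        simp [hn, this]
    have hBval : HasSum (fun n : ℕ => q n * (r:ℂ)^n *
        (if (n:ℤ) + (m:ℤ) = 0 then ((2*Real.pi : ℝ):ℂ) else 0)) 0 := by
      refine hasSum_congr' (fun n => ?_) hasSum_zero
      have : ¬((n:ℤ) + (m:ℤ) = 0) := by omega
      simp [this]
    have hCval : HasSum (fun n : ℕ => q n * (r:ℂ)^n *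
        (if (n:ℤ) + (0:ℤ) = 0 then ((2*Real.pi : ℝ):ℂ) else 0))
        (q 0 * ((2*Real.pi : ℝ):ℂ)) := by
      have := hasSum_ite_eq 0 (q 0 * ((2*Real.pi : ℝ):ℂ))
      refine hasSum_congr' (fun n => ?_) this
      by_cases hn : n = 0
      · subst hn; simp
      · have : ¬((n:ℤ) + (0:ℤ) = 0) := by omega
        simp [hn, this]
    have eqA := hA.unique hAval
    have eqB := hB.unique hBval
    have eqC := hC.unique hCval
    set T : ℝ := 2*Real.pi with hT
    have hTpos : 0 < T := by positivity
    have hce : ∀ l : ℤ, Continuous fun θ:ℝ => Complex.exp ((l:ℂ)*θ*I) := by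
      intro l
      exact Complex.continuous_exp.comp ((continuous_const.mul
        Complex.continuous_ofReal).mul continuous_const)
    have habse : ∀ (l : ℤ) (θ : ℝ), ‖Complex.exp ((l:ℂ)*θ*I)‖ = 1 := by
      intro l θ
      rw [show (l:ℂ)*(θ:ℂ)*I = ((l*θ : ℝ):ℂ)*I by push_cast; ring]
      exact Complex.norm_exp_ofReal_mul_I _
    -- the conjugate integral vanishes
    have hconj : (∫ θ in (0:ℝ)..T, (starRingEnd ℂ) (g (w θ)) *
        Complex.exp (((-(m:ℤ) : ℤ):ℂ) * θ * I)) = 0 := by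
      have hptw : ∀ θ : ℝ, (starRingEnd ℂ) (g (w θ)) * Complex.exp (((-(m:ℤ) : ℤ):ℂ) * θ * I)
          = (starRingEnd ℂ) (g (w θ) * Complex.exp ((((m:ℤ) : ℤ):ℂ) * θ * I)) := by
        intro θ
        rw [map_mul, ← Complex.exp_conj]
        congr 2
        simp only [map_mul, Complex.conj_I, Complex.conj_ofReal, map_intCast]
        push_cast
        ring
      rw [intervalIntegral.integral_congr (fun θ _ => hptw θ), intervalIntegral_conj, eqB,
        map_zero]
    -- combine
    have htot : (∫ θ in (0:ℝ)..T, ((2*(g (w θ)).re : ℝ):ℂ) *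
        Complex.exp (((-(m:ℤ) : ℤ):ℂ) * θ * I)) = q m * (r:ℂ)^m * ((2*Real.pi : ℝ):ℂ) := by
      have hptw : ∀ θ : ℝ, ((2*(g (w θ)).re : ℝ):ℂ) * Complex.exp (((-(m:ℤ) : ℤ):ℂ) * θ * I)
          = g (w θ) * Complex.exp (((-(m:ℤ) : ℤ):ℂ) * θ * I)
            + (starRingEnd ℂ) (g (w θ)) * Complex.exp (((-(m:ℤ) : ℤ):ℂ) * θ * I) := by
        intro θ
        rw [← add_mul]
        congr 1
        rw [← Complex.add_conj]
      rw [intervalIntegral.integral_congr (fun θ _ => hptw θ), intervalIntegral.integral_add,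
        hconj, add_zero]
      · exact eqA
      · exact (hgw_cont.mul (hce _)).intervalIntegrable _ _
      · exact ((Complex.continuous_conj.comp hgw_cont).mul (hce _)).intervalIntegrable _ _
    -- take norms
    have hnorm_le := intervalIntegral.norm_integral_le_integral_norm
      (f := fun θ : ℝ => ((2*(g (w θ)).re : ℝ):ℂ) * Complex.exp (((-(m:ℤ) : ℤ):ℂ) * θ * I))
      (μ := MeasureTheory.volume) (a := 0) (b := T) hTpos.le
    rw [htot] at hnorm_le
    have hLHS : ‖q m * (r:ℂ)^m * ((2*Real.pi : ℝ):ℂ)‖ = ‖q m‖ * r^m * T := by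
      simp only [norm_mul, norm_pow, Complex.norm_real, Real.norm_eq_abs,
        _root_.abs_of_nonneg hr0.le, _root_.abs_of_nonneg hTpos.le, abs_two, _root_.abs_of_nonneg Real.pi_pos.le, hT]
    have hRHS : (∫ θ in (0:ℝ)..T, ‖((2*(g (w θ)).re : ℝ):ℂ) *
        Complex.exp (((-(m:ℤ) : ℤ):ℂ) * θ * I)‖) = ∫ θ in (0:ℝ)..T, 2*(g (w θ)).re := by
      refine intervalIntegral.integral_congr fun θ _ => ?_
      rw [norm_mul, habse, mul_one,
        Complex.norm_real, Real.norm_eq_abs, _root_.abs_of_nonneg]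
      have := hre (w θ) (hw_mem θ)
      linarith
    rw [hRHS] at hnorm_le
    rw [hLHS] at hnorm_le
    -- compute the right-hand side
    have hre_int : (∫ θ in (0:ℝ)..T, 2*(g (w θ)).re) = 2 * ((q 0).re * T) := by
      rw [intervalIntegral.integral_const_mul]
      congr 1
      have h1 : (∫ θ in (0:ℝ)..T, (g (w θ)).re) = (∫ θ in (0:ℝ)..T, g (w θ)).re :=
        intervalIntegral_re (hgw_cont.intervalIntegrable _ _)
      rw [h1]
      have h2 : (∫ θ in (0:ℝ)..T, g (w θ)) = q 0 * ((2*Real.pi : ℝ):ℂ) := by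
        rw [← eqC]
        refine intervalIntegral.integral_congr fun θ _ => ?_
        simp
      rw [h2]
      simp [hT, Complex.ofReal_mul]
    rw [hre_int] at hnorm_le
    have : ‖q m‖ * r^m * T ≤ (2 * (q 0).re) * T := by
      calc ‖q m‖ * r^m * T ≤ 2 * ((q 0).re * T) := hnorm_le
        _ = (2 * (q 0).re) * T := by ring
    exact le_of_mul_le_mul_right this hTpos
  -- limit r → 1⁻
  have hlim : Filter.Tendsto (fun r:ℝ => ‖q m‖ * r^m)
      (nhdsWithin 1 (Set.Iio 1)) (nhds (‖q m‖)) := by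
    have h1 : Filter.Tendsto (fun r:ℝ => ‖q m‖ * r^m) (nhds 1)
        (nhds (‖q m‖ * 1^m)) :=
      ((continuous_const.mul (continuous_pow m)).tendsto 1)
    simpa using h1.mono_left nhdsWithin_le_nhds
  refine le_of_tendsto hlim ?_
  filter_upwards [Ioo_mem_nhdsLT_of_mem (Set.mem_Ioc.mpr ⟨zero_lt_one, le_refl 1⟩)] with r hr
  exact key r hr.1 hr.2
end StarlikeAux

open StarlikeAux FormalMultilinearSeries Finset

/-- Coefficient bounds for starlike `f(z) = z + Σ a_{nk+1} z^{nk+1}`: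
`|a_{k+1}| ≤ 2/k` and `|a_{2k+1}| ≤ (k+2)/k²`. -/
theorem starlike_coeff_bounds (k : ℕ) (hk : 1 ≤ k) (f : ℂ → ℂ) (c : ℕ → ℂ)
    (hc0 : c 0 = 0) (hc1 : c 1 = 1)
    (hgap : ∀ m, 1 < m → (¬ ∃ n : ℕ, 1 ≤ n ∧ m = n * k + 1) → c m = 0)
    (hf : ∀ z ∈ ball (0 : ℂ) 1, HasSum (fun m : ℕ => c m * z ^ m) (f z))
    (hinj : Set.InjOn f (ball (0 : ℂ) 1))
    (hstar : ∀ z ∈ ball (0 : ℂ) 1, z ≠ 0 → 0 < (z * deriv f z / f z).re) :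
    ‖c (k + 1)‖ ≤ 2 / (k : ℝ) ∧
      ‖c (2 * k + 1)‖ ≤ ((k : ℝ) + 2) / (k : ℝ) ^ 2 := by
  have hball0 : (0:ℂ) ∈ ball (0:ℂ) 1 := by simp
  have hP : HasFPowerSeriesOnBall f (ofScalars ℂ c) 0 1 := hasFPowerSeriesOnBall_of_hasSum hf
  have f0 : f 0 = 0 := by
    have h1 := hf 0 hball0
    have h2 : HasSum (fun m : ℕ => c m * (0:ℂ) ^ m) 0 := by
      have := hasSum_single (f := fun m : ℕ => c m * (0:ℂ) ^ m) 0
        (fun b hb => by simp [zero_pow hb])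
      simpa [hc0] using this
    exact h1.unique h2
  have hcoeffP : ∀ n, (ofScalars ℂ c).coeff n = c n := by
    intro n
    rw [show (ofScalars ℂ c).coeff n = ofScalars ℂ c n (fun _ => 1) from rfl,
      ofScalars_apply_eq]
    simp
  have hder0 : deriv f 0 = 1 := by
    rw [hP.hasFPowerSeriesAt.deriv]
    rw [ofScalars_apply_eq]
    simp [hc1]
  have fa : AnalyticOnNhd ℂ f (ball (0:ℂ) 1) := by
    have := hP.analyticOnNhd
    rwa [ball01] at this
  have hfne : ∀ z ∈ ball (0:ℂ) 1, z ≠ 0 → f z ≠ 0 := by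
    intro z hz hz0 hfz
    exact hz0 (hinj hz hball0 (by rw [hfz, f0]))
  set u : ℂ → ℂ := dslope f 0 with hu
  have hu_diff : DifferentiableOn ℂ u (ball (0:ℂ) 1) :=
    (Complex.differentiableOn_dslope (ball_mem_nhds 0 one_pos)).mpr fa.differentiableOn
  have hu0 : u 0 = 1 := by rw [hu, dslope_same, hder0]
  have huz : ∀ z : ℂ, z ≠ 0 → u z = f z / z := by
    intro z hz0
    rw [hu, dslope_of_ne f hz0, slope_def_field, f0, sub_zero, sub_zero]
  have hune : ∀ z ∈ ball (0:ℂ) 1, u z ≠ 0 := by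
    intro z hz
    by_cases hz0 : z = 0
    · rw [hz0, hu0]; exact one_ne_zero
    · rw [huz z hz0]
      exact div_ne_zero (hfne z hz hz0) hz0
  set g : ℂ → ℂ := fun z => deriv f z / u z with hgdef
  have hg_diff : DifferentiableOn ℂ g (ball (0:ℂ) 1) :=
    (fa.deriv.differentiableOn).div hu_diff hune
  have hg0 : g 0 = 1 := by rw [hgdef]; simp [hu0, hder0]
  have hgz : ∀ z ∈ ball (0:ℂ) 1, z ≠ 0 → g z = z * deriv f z / f z := by
    intro z hz hz0
    rw [hgdef]
    simp only
    rw [huz z hz0]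
    field_simp
  have hre : ∀ z ∈ ball (0:ℂ) 1, 0 ≤ (g z).re := by
    intro z hz
    by_cases hz0 : z = 0
    · rw [hz0, hg0]; norm_num
    · rw [hgz z hz hz0]
      exact (hstar z hz hz0).le
  have hid : ∀ z ∈ ball (0:ℂ) 1, z * deriv f z = g z * f z := by
    intro z hz
    by_cases hz0 : z = 0
    · rw [hz0, f0]; ring
    · rw [hgz z hz hz0, div_mul_cancel₀ _ (hfne z hz hz0)]
  obtain ⟨q, hgq⟩ := exists_hasSum_of_differentiableOn hg_diff
  have q0 : q 0 = 1 := by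
    have h1 := hgq 0 hball0
    have h2 : HasSum (fun m : ℕ => q m * (0:ℂ) ^ m) (q 0) := by
      have := hasSum_single (f := fun m : ℕ => q m * (0:ℂ) ^ m) 0
        (fun b hb => by simp [zero_pow hb])
      simpa using this
    rw [← hg0]
    exact h2.unique h1
  -- Caratheodory bound
  have qb : ∀ m : ℕ, 1 ≤ m → ‖q m‖ ≤ 2 := by
    intro m hm
    have := caratheodory hgq hg_diff.continuousOn hre hm
    rwa [q0, Complex.one_re, mul_one] at this
  -- coefficient identity
  have hzd := hasSum_z_mul_deriv hP
  have hmul := hasSum_mul hgq hf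
  have hmul' : ∀ z ∈ ball (0:ℂ) 1, HasSum
      (fun m : ℕ => (∑ kl ∈ antidiagonal m, q kl.1 * c kl.2) * z ^ m) (z * deriv f z) := by
    intro z hz
    rw [hid z hz]
    exact hmul z hz
  have hSeq : ofScalars ℂ (fun m : ℕ => (m : ℂ) * c m)
      = ofScalars ℂ (fun m : ℕ => ∑ kl ∈ antidiagonal m, q kl.1 * c kl.2) :=
    (hasFPowerSeriesOnBall_of_hasSum hzd).hasFPowerSeriesAt.eq_formalMultilinearSeries
      (hasFPowerSeriesOnBall_of_hasSum hmul').hasFPowerSeriesAt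
  have hcoeff : ∀ M : ℕ, (M : ℂ) * c M = ∑ kl ∈ antidiagonal M, q kl.1 * c kl.2 :=
    fun M => congrFun (ofScalars_series_injective ℂ ℂ hSeq) M
  -- evaluate the antidiagonal sums
  have gap' : ∀ j : ℕ, 1 < j → j < k + 1 → c j = 0 := by
    intro j h1 h2
    refine hgap j h1 ?_
    rintro ⟨n, hn1, hn2⟩
    have : k ≤ n * k := Nat.le_mul_of_pos_left k hn1
    omega
  have gap2 : ∀ j : ℕ, 1 < j → j < 2*k + 1 → j ≠ k + 1 → c j = 0 := by
    intro j h1 h2 h3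
    refine hgap j h1 ?_
    rintro ⟨n, hn1, hn2⟩
    rcases Nat.lt_or_ge n 2 with hn | hn
    · interval_cases n
      · omega
    · have : 2 * k ≤ n * k := Nat.mul_le_mul_right k hn
      omega
  have hsum1 : ∑ kl ∈ antidiagonal (k+1), q kl.1 * c kl.2 = c (k+1) + q k := by
    rw [Finset.Nat.sum_antidiagonal_eq_sum_range_succ_mk]
    have hsub : ({0, k} : Finset ℕ) ⊆ range (k+1+1) := by
      intro i hi
      simp only [Finset.mem_insert, Finset.mem_singleton] at hi
      rcases hi with rfl | rfl <;> simp [Finset.mem_range] <;> omega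
    rw [← Finset.sum_subset hsub (fun i hi hni => ?_)]
    · rw [Finset.sum_pair (by omega : (0:ℕ) ≠ k)]
      rw [q0, show k + 1 - 0 = k + 1 by omega, show k + 1 - k = 1 by omega, hc1]
      ring
    · simp only [Finset.mem_insert, Finset.mem_singleton, not_or] at hni
      simp only [Finset.mem_range] at hi
      rcases Nat.lt_or_ge i (k+1) with hik | hik
      · have : c (k + 1 - i) = 0 := gap' _ (by omega) (by omega)
        rw [this, mul_zero]
      · have : i = k + 1 := by omega
        rw [this, show k + 1 - (k+1) = 0 by omega, hc0, mul_zero]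
  have hsum2 : ∑ kl ∈ antidiagonal (2*k+1), q kl.1 * c kl.2
      = c (2*k+1) + q k * c (k+1) + q (2*k) := by
    rw [Finset.Nat.sum_antidiagonal_eq_sum_range_succ_mk]
    have hsub : ({0, k, 2*k} : Finset ℕ) ⊆ range (2*k+1+1) := by
      intro i hi
      simp only [Finset.mem_insert, Finset.mem_singleton] at hi
      rcases hi with rfl | rfl | rfl <;> simp [Finset.mem_range] <;> omega
    rw [← Finset.sum_subset hsub (fun i hi hni => ?_)]
    · rw [Finset.sum_insert (by
        simp only [Finset.mem_insert, Finset.mem_singleton, not_or]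
        omega), Finset.sum_pair (by omega : k ≠ 2*k)]
      rw [q0, show 2*k + 1 - 0 = 2*k + 1 by omega, show 2*k + 1 - k = k + 1 by omega,
        show 2*k + 1 - 2*k = 1 by omega, hc1]
      ring
    · simp only [Finset.mem_insert, Finset.mem_singleton, not_or] at hni
      simp only [Finset.mem_range] at hi
      rcases Nat.lt_or_ge i (2*k+1) with hik | hik
      · have : c (2*k + 1 - i) = 0 := gap2 _ (by omega) (by omega) (by omega)
        rw [this, mul_zero]
      · have : i = 2*k + 1 := by omega
        rw [this, show 2*k + 1 - (2*k+1) = 0 by omega, hc0, mul_zero]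
  -- the two identities
  have h1 := hcoeff (k+1)
  rw [hsum1] at h1
  have h2 := hcoeff (2*k+1)
  rw [hsum2] at h2
  have qk_eq : q k = (k:ℂ) * c (k+1) := by
    push_cast at h1
    linear_combination -h1
  have q2k_eq : (2*(k:ℂ)) * c (2*k+1) = q k * c (k+1) + q (2*k) := by
    push_cast at h2
    linear_combination h2
  -- real arithmetic
  have hkR : (1:ℝ) ≤ (k:ℝ) := by exact_mod_cast hk
  have hkR0 : (0:ℝ) < (k:ℝ) := by linarith
  have hqk := qb k hk
  have hq2k := qb (2*k) (by omega)
  have habs1 : (k:ℝ) * ‖c (k+1)‖ ≤ 2 := by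
    have : ‖q k‖ = (k:ℝ) * ‖c (k+1)‖ := by
      rw [qk_eq, norm_mul]
      simp [Complex.norm_natCast]
    linarith [this ▸ hqk]
  have hbound1 : ‖c (k+1)‖ ≤ 2 / (k:ℝ) := by
    rw [le_div_iff₀ hkR0]
    linarith
  refine ⟨hbound1, ?_⟩
  have habs2 : 2*(k:ℝ) * ‖c (2*k+1)‖ ≤ ‖q k‖ * ‖c (k+1)‖ + 2 := by
    have e1 : ‖(2*(k:ℂ)) * c (2*k+1)‖ = 2*(k:ℝ) * ‖c (2*k+1)‖ := by
      rw [norm_mul]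
      congr 1
      simp [Complex.norm_natCast]
    calc 2*(k:ℝ) * ‖c (2*k+1)‖ = ‖(2*(k:ℂ)) * c (2*k+1)‖ := e1.symm
      _ = ‖q k * c (k+1) + q (2*k)‖ := by rw [q2k_eq]
      _ ≤ ‖q k * c (k+1)‖ + ‖q (2*k)‖ := norm_add_le _ _
      _ ≤ ‖q k‖ * ‖c (k+1)‖ + 2 := by
          rw [norm_mul]; linarith
  have hfin : 2*(k:ℝ) * ‖c (2*k+1)‖ ≤ 2 * (2/(k:ℝ)) + 2 := by
    have h3 : ‖q k‖ * ‖c (k+1)‖ ≤ 2 * (2/(k:ℝ)) := by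
      have hnn : 0 ≤ ‖c (k+1)‖ := norm_nonneg _
      have hnn2 : 0 ≤ ‖q k‖ := norm_nonneg _
      calc ‖q k‖ * ‖c (k+1)‖ ≤ 2 * ‖c (k+1)‖ := by
            apply mul_le_mul_of_nonneg_right hqk hnn
        _ ≤ 2 * (2/(k:ℝ)) := by linarith
    linarith
  have A1nn : 0 ≤ ‖c (k+1)‖ := norm_nonneg _
  have Ann : 0 ≤ ‖c (2*k+1)‖ := norm_nonneg _
  have e2 : 2*(k:ℝ)*‖c (2*k+1)‖ ≤ 2*‖c (k+1)‖ + 2 := by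
    have e1 : ‖q k‖ * ‖c (k+1)‖ ≤ 2 * ‖c (k+1)‖ :=
      mul_le_mul_of_nonneg_right hqk A1nn
    linarith
  have e3 := mul_le_mul_of_nonneg_left e2 hkR0.le
  rw [le_div_iff₀ (by positivity : (0:ℝ) < (k:ℝ)^2)]
  nlinarith [e3, habs1, hkR0]
end
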